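/- Discrete integration by parts for the average operator: for u defined on the closed mesh and v on the dual mesh, ∫_M u·A_h v = ∫_{M*} v·A_h u - (h/2)·Σ_{x∈∂M} u(x)·t_r(v)(x). -/

import Mathlib

lemma key_ibp_abs (U V : ℕ → ℝ) : ∀ M : ℕ,
    ∑ i ∈ Finset.range M, U (i + 1) * ((V (i + 1) + V i) / 2)
      = ∑ i ∈ Finset.range (M + 1), V i * ((U (i + 1) + U i) / 2)
        - (U (M + 1) * V M + U 0 * V 0) / 2 := by
  intro M
  induction M with
  | zero => simp [Finset.sum_range_succ]; ring
  | succ n ih =>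
      rw [Finset.sum_range_succ, ih, Finset.sum_range_succ (n := n + 1)]
      ring

lemma key_ibp (h : ℝ) (u v : ℝ → ℝ) (M : ℕ) :
    ∑ i ∈ Finset.range M, u (((i : ℝ) + 1) * h) *
        ((v (((i : ℝ) + 1) * h + h / 2) + v (((i : ℝ) + 1) * h - h / 2)) / 2)
      = ∑ i ∈ Finset.range (M + 1),
            v (((i : ℝ) + 1 / 2) * h) *
              ((u (((i : ℝ) + 1 / 2) * h + h / 2) + u (((i : ℝ) + 1 / 2) * h - h / 2)) / 2)
        - (u (((M : ℝ) + 1) * h) * v (((M : ℝ) + 1 / 2) * h) + u 0 * v ((1 / 2) * h)) / 2 := by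
  have key := key_ibp_abs (fun i => u ((i : ℝ) * h)) (fun i => v (((i : ℝ) + 1 / 2) * h)) M
  have hL : ∑ i ∈ Finset.range M, u (((i : ℝ) + 1) * h) *
        ((v (((i : ℝ) + 1) * h + h / 2) + v (((i : ℝ) + 1) * h - h / 2)) / 2)
      = ∑ i ∈ Finset.range M, u ((((i + 1 : ℕ)) : ℝ) * h) *
        ((v (((((i + 1 : ℕ)) : ℝ) + 1 / 2) * h) + v (((i : ℝ) + 1 / 2) * h)) / 2) := by
    refine Finset.sum_congr rfl fun i _ => ?_
    push_cast
    ring_nf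
  have hR : ∑ i ∈ Finset.range (M + 1),
            v (((i : ℝ) + 1 / 2) * h) *
              ((u (((i : ℝ) + 1 / 2) * h + h / 2) + u (((i : ℝ) + 1 / 2) * h - h / 2)) / 2)
      = ∑ i ∈ Finset.range (M + 1),
            v (((i : ℝ) + 1 / 2) * h) *
              ((u ((((i + 1 : ℕ)) : ℝ) * h) + u ((i : ℝ) * h)) / 2) := by
    refine Finset.sum_congr rfl fun i _ => ?_
    push_cast
    ring_nf
  rw [hL, hR, key]
  push_cast
  norm_num

/-- Discrete integration by parts for the average operator:
`∫_M u·A_h v = ∫_{M*} v·A_h u - (h/2)·(u(1)·v(1-h/2) + u(0)·v(h/2))`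
on the mesh with step `h = 1/(M+1)`. -/
theorem discrete_space_ibp_Ah (M : ℕ) (u v : ℝ → ℝ) :
    let h : ℝ := 1 / (M + 1)
    h * ∑ i ∈ Finset.Icc 1 M, u (i * h) * ((v (i * h + h / 2) + v (i * h - h / 2)) / 2)
      = h * ∑ i ∈ Finset.Icc 0 M,
            v (((i : ℝ) + 1 / 2) * h) *
              ((u (((i : ℝ) + 1 / 2) * h + h / 2) + u (((i : ℝ) + 1 / 2) * h - h / 2)) / 2)
        - (h / 2) * (u 1 * v (1 - h / 2) + u 0 * v (0 + h / 2)) := by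
  intro h
  have hM : ((M : ℝ) + 1) ≠ 0 := by positivity
  have h1 : ((M : ℝ) + 1) * h = 1 := by
    show ((M : ℝ) + 1) * (1 / ((M : ℝ) + 1)) = 1
    field_simp
  rw [← Finset.Ico_add_one_right_eq_Icc, ← Finset.Ico_add_one_right_eq_Icc, Finset.sum_Ico_eq_sum_range,
    Finset.sum_Ico_eq_sum_range]
  simp only [Nat.succ_sub_one, Nat.add_sub_cancel, Nat.sub_zero, Nat.zero_add]
  have e1 : ∑ i ∈ Finset.range M,
      u ((((1 + i : ℕ)) : ℝ) * h) * ((v ((((1 + i : ℕ)) : ℝ) * h + h / 2)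
        + v ((((1 + i : ℕ)) : ℝ) * h - h / 2)) / 2)
      = ∑ i ∈ Finset.range M, u (((i : ℝ) + 1) * h) *
        ((v (((i : ℝ) + 1) * h + h / 2) + v (((i : ℝ) + 1) * h - h / 2)) / 2) := by
    refine Finset.sum_congr rfl fun i _ => ?_
    push_cast
    ring_nf
  have hb1 : u 1 = u (((M : ℝ) + 1) * h) := by rw [h1]
  have hb2 : v (1 - h / 2) = v (((M : ℝ) + 1 / 2) * h) := by
    congr 1
    rw [show ((M : ℝ) + 1 / 2) * h = ((M : ℝ) + 1) * h - h / 2 by ring, h1]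
  have hb3 : v (0 + h / 2) = v ((1 / 2) * h) := by congr 1; ring
  rw [e1, key_ibp h u v M, hb1, hb2, hb3]
  ring
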